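/- Let ω = δ_0 (point mass at 0) and σ = ∑_{n=2}^∞ n δ_n on ℝ. Then the pivotal condition V(ω,σ)² is finite: for every interval I_0 and every decomposition I_0 = ∪_r I_r into disjoint intervals, ∑_r ω(I_r) P(I_r, 1_{I_0}σ)² ≤ C σ(I_0); but the one-tailed A_2 condition fails, since with I = [0,1], (ω(I)/|I|) P(I,σ) = ∑_{n≥2} n/n² = ∞. -/

import Mathlib

open MeasureTheory ENNReal

/-- An interval in `ℝ` given by its center and (positive) half-length. -/
structure RInterval where
  c : ℝ
  r : ℝ
  hr : 0 < r

namespace RInterval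

def set (I : RInterval) : Set ℝ := Set.Ico (I.c - I.r) (I.c + I.r)

noncomputable def len (I : RInterval) : ℝ := 2 * I.r

end RInterval

/-- The one-dimensional Poisson integral `P(I,ω) = ∫ |I|/(|I|+dist(x,I))² dω(x)`. -/
noncomputable def poisson (I : RInterval) (ω : Measure ℝ) : ℝ≥0∞ :=
  ∫⁻ x, ENNReal.ofReal (I.len / (I.len + Metric.infDist x I.set) ^ 2) ∂ω


/-- `ω = δ_0`, the unit point mass at the origin. -/
noncomputable def omegaMeas : Measure ℝ := Measure.dirac 0

/-- `σ = ∑_{n≥2} n δ_n`. -/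
noncomputable def sigmaMeas : Measure ℝ :=
  Measure.sum (fun k : ℕ => (((k : ℝ≥0∞) + 2)) • Measure.dirac ((k : ℝ) + 2))

/-- The unit interval `[0,1)` as an `RInterval`. -/
noncomputable def unitInterval' : RInterval := ⟨1/2, 1/2, by norm_num⟩

lemma kernel_bound (I : RInterval) (hI : (0:ℝ) ∈ I.set) {x : ℝ} (hx : 2 ≤ x) :
    x * (I.len / (I.len + Metric.infDist x I.set) ^ 2) ≤ 2 := by
  obtain ⟨h1, h2⟩ := hI
  have hr := I.hr
  have hL : 0 < I.len := by unfold RInterval.len; linarith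
  set d := Metric.infDist x I.set with hd
  have hd0 : 0 ≤ d := Metric.infDist_nonneg
  have hdge : x - I.len ≤ d := by
    rw [hd, Metric.infDist_eq_iInf]
    have : Nonempty I.set := ⟨0, h1, h2⟩
    refine le_ciInf fun y => ?_
    have hy := y.2
    simp only [RInterval.set, Set.mem_Ico] at hy
    rw [Real.dist_eq]
    have hyL : (y:ℝ) ≤ I.len := by
      have := hy.2; unfold RInterval.len; linarith
    calc x - I.len ≤ x - y := by linarith
    _ ≤ |x - y| := le_abs_self _
  have hpos : 0 < (I.len + d) ^ 2 := by positivity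
  rw [mul_div_assoc', div_le_iff₀ hpos]
  nlinarith [mul_le_mul_of_nonneg_left hdge hL.le, sq_nonneg d, mul_nonneg hL.le hd0]

lemma kernel_bound' (I : RInterval) (hI : (0:ℝ) ∈ I.set) (k : ℕ) :
    ((k:ℝ≥0∞)+2) * ENNReal.ofReal (I.len / (I.len + Metric.infDist ((k:ℝ)+2) I.set) ^ 2)
      ≤ 2 := by
  have hx : (2:ℝ) ≤ (k:ℝ)+2 := by have := Nat.cast_nonneg (α:=ℝ) k; linarith
  have h := kernel_bound I hI hx
  have hc : ((k:ℝ≥0∞)+2) = ENNReal.ofReal ((k:ℝ)+2) := by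
    rw [ENNReal.ofReal_add (by positivity) (by norm_num)]
    simp
  rw [hc, ← ENNReal.ofReal_mul (by positivity)]
  calc ENNReal.ofReal _ ≤ ENNReal.ofReal 2 := ENNReal.ofReal_le_ofReal h
  _ = 2 := by norm_num

open scoped Classical in
lemma poisson_restrict (I I₀ : RInterval) :
    poisson I (sigmaMeas.restrict I₀.set) =
      ∑' k : ℕ, if ((k:ℝ)+2) ∈ I₀.set then
        ((k:ℝ≥0∞)+2) * ENNReal.ofReal (I.len / (I.len + Metric.infDist ((k:ℝ)+2) I.set) ^ 2)
      else 0 := by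
  classical
  have hs : MeasurableSet I₀.set := measurableSet_Ico
  rw [poisson, sigmaMeas, Measure.restrict_sum _ hs, lintegral_sum_measure]
  refine tsum_congr fun k => ?_
  rw [Measure.restrict_smul, lintegral_smul_measure, MeasureTheory.restrict_dirac' hs]
  split_ifs with h
  · rw [lintegral_dirac, smul_eq_mul]
  · simp

open scoped Classical in
lemma sigma_apply (I₀ : RInterval) :
    sigmaMeas I₀.set = ∑' k : ℕ, if ((k:ℝ)+2) ∈ I₀.set then ((k:ℝ≥0∞)+2) else 0 := by
  classical
  have hs : MeasurableSet I₀.set := measurableSet_Ico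
  rw [sigmaMeas, Measure.sum_apply _ hs]
  refine tsum_congr fun k => ?_
  rw [Measure.smul_apply, Measure.dirac_apply' _ hs]
  simp only [Set.indicator_apply, smul_eq_mul]
  split_ifs <;> simp

lemma dc (I₀ : RInterval) (h0 : (0:ℝ) ∈ I₀.set) {j k : ℕ} (hjk : j ≤ k)
    (hk : ((k:ℝ)+2) ∈ I₀.set) : ((j:ℝ)+2) ∈ I₀.set := by
  obtain ⟨h1, _⟩ := h0
  obtain ⟨_, h4⟩ := hk
  have hj : (j:ℝ) ≤ (k:ℝ) := Nat.cast_le.2 hjk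
  have hj0 : (0:ℝ) ≤ (j:ℝ) := Nat.cast_nonneg j
  exact ⟨by linarith, by linarith⟩

lemma arith_nat (M : ℕ) : ((M+1) * 2)^2 ≤ 8 * ∑ k ∈ Finset.range (M+1), (k+2) := by
  induction M with
  | zero => simp
  | succ n ih =>
    rw [Finset.sum_range_succ]
    nlinarith [ih]

lemma arith (M : ℕ) : (((M+1:ℕ):ℝ≥0∞) * 2)^2 ≤ 8 * ∑ k ∈ Finset.range (M+1), ((k:ℝ≥0∞)+2) := by
  have h1 : ∑ k ∈ Finset.range (M+1), ((k:ℝ≥0∞)+2)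
      = ((∑ k ∈ Finset.range (M+1), (k+2) : ℕ) : ℝ≥0∞) := by
    push_cast; rfl
  rw [h1]
  exact_mod_cast arith_nat M

open scoped Classical in
lemma main_bound (I I₀ : RInterval) (hI : (0:ℝ) ∈ I.set) (h0 : (0:ℝ) ∈ I₀.set) :
    (poisson I (sigmaMeas.restrict I₀.set)) ^ 2 ≤ 8 * sigmaMeas I₀.set := by
  rw [poisson_restrict, sigma_apply]
  set K : Set ℕ := {k | ((k:ℝ)+2) ∈ I₀.set} with hK
  by_cases hbd : ∃ N, ∀ k ∈ K, k ≤ N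
  · obtain ⟨N, hN⟩ := hbd
    by_cases hne : K.Nonempty
    · obtain ⟨M, hMK, hMmax'⟩ := Set.Finite.exists_maximalFor id K
        (Set.Finite.subset (Set.finite_Iic N) fun k hk => hN k hk) hne
      have hMmax : ∀ k ∈ K, k ≤ M := by
        intro k hk
        by_contra h
        push_neg at h
        have h2 := hMmax' hk h.le
        simp only [id_eq] at h2
        omega
      have hsup : ∀ k ∈ Finset.range (M+1), k ∈ K := by
        intro k hk
        rw [Finset.mem_range] at hk
        exact dc I₀ h0 (by omega : k ≤ M) hMK
      have hPle : (∑' k : ℕ, if ((k:ℝ)+2) ∈ I₀.set then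
            ((k:ℝ≥0∞)+2) * ENNReal.ofReal (I.len / (I.len + Metric.infDist ((k:ℝ)+2) I.set) ^ 2)
          else 0) ≤ ((M+1:ℕ):ℝ≥0∞) * 2 := by
        calc (∑' k : ℕ, if ((k:ℝ)+2) ∈ I₀.set then
            ((k:ℝ≥0∞)+2) * ENNReal.ofReal (I.len / (I.len + Metric.infDist ((k:ℝ)+2) I.set) ^ 2)
          else 0)
            ≤ ∑' k : ℕ, (if k ∈ Finset.range (M+1) then (2:ℝ≥0∞) else 0) := by
              refine Summable.tsum_le_tsum (fun k => ?_) ENNReal.summable ENNReal.summable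
              by_cases hk : ((k:ℝ)+2) ∈ I₀.set
              · rw [if_pos hk, if_pos (Finset.mem_range.2 (by have := hMmax k hk; omega))]
                exact kernel_bound' I hI k
              · rw [if_neg hk]
                exact zero_le
          _ = ∑ k ∈ Finset.range (M+1), (if k ∈ Finset.range (M+1) then (2:ℝ≥0∞) else 0) :=
              tsum_eq_sum (fun k hk => if_neg hk)
          _ = ((M+1:ℕ):ℝ≥0∞) * 2 := by
              rw [Finset.sum_ite_of_true (fun k hk => hk)]
              simp [Finset.sum_const, Finset.card_range, nsmul_eq_mul]
      have hσge : ∑ k ∈ Finset.range (M+1), ((k:ℝ≥0∞)+2)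
          ≤ ∑' k : ℕ, (if ((k:ℝ)+2) ∈ I₀.set then ((k:ℝ≥0∞)+2) else 0) := by
        calc ∑ k ∈ Finset.range (M+1), ((k:ℝ≥0∞)+2)
            = ∑ k ∈ Finset.range (M+1), (if ((k:ℝ)+2) ∈ I₀.set then ((k:ℝ≥0∞)+2) else 0) :=
              Finset.sum_congr rfl fun k hk => (if_pos (hsup k hk)).symm
          _ ≤ _ := ENNReal.sum_le_tsum _
      calc (∑' k : ℕ, if ((k:ℝ)+2) ∈ I₀.set then
            ((k:ℝ≥0∞)+2) * ENNReal.ofReal (I.len / (I.len + Metric.infDist ((k:ℝ)+2) I.set) ^ 2)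
          else 0) ^ 2
          ≤ (((M+1:ℕ):ℝ≥0∞) * 2) ^ 2 := by
            rw [sq, sq]; exact mul_le_mul' hPle hPle
        _ ≤ 8 * ∑ k ∈ Finset.range (M+1), ((k:ℝ≥0∞)+2) := arith M
        _ ≤ 8 * ∑' k : ℕ, (if ((k:ℝ)+2) ∈ I₀.set then ((k:ℝ≥0∞)+2) else 0) :=
            mul_le_mul_right hσge 8
    · have hmem : ∀ k : ℕ, ¬ (((k:ℝ)+2) ∈ I₀.set) := fun k hk => hne ⟨k, hk⟩
      simp [hmem]
  · push_neg at hbd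
    have hall : ∀ j : ℕ, ((j:ℝ)+2) ∈ I₀.set := by
      intro j
      obtain ⟨k, hk, hjk⟩ := hbd j
      exact dc I₀ h0 hjk.le hk
    have htop : (∑' k : ℕ, (if ((k:ℝ)+2) ∈ I₀.set then ((k:ℝ≥0∞)+2) else 0)) = ⊤ := by
      rw [eq_top_iff]
      calc (⊤:ℝ≥0∞) = ∑' _ : ℕ, (2:ℝ≥0∞) :=
            (ENNReal.tsum_const_eq_top_of_ne_zero two_ne_zero).symm
        _ ≤ _ := by
            refine Summable.tsum_le_tsum (fun k => ?_) ENNReal.summable ENNReal.summable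
            rw [if_pos (hall k)]
            exact le_add_self
    rw [htop]
    simp

open scoped Classical in
lemma omega_apply (s : Set ℝ) (hs : MeasurableSet s) :
    omegaMeas s = if (0:ℝ) ∈ s then 1 else 0 := by
  classical
  rw [omegaMeas, Measure.dirac_apply' _ hs]
  simp [Set.indicator_apply]

lemma harmonic_top : (∑' k : ℕ, ENNReal.ofReal (1/(2*((k:ℝ)+3)))) = ⊤ := by
  by_contra h
  have h2 : Summable (fun k : ℕ => Real.toNNReal (1/(2*((k:ℝ)+3)))) :=
    ENNReal.tsum_coe_ne_top_iff_summable.1 h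
  have h3 : Summable (fun k : ℕ => 1/(2*((k:ℝ)+3))) := by
    have hc := NNReal.summable_coe.2 h2
    refine hc.congr fun k => ?_
    rw [Real.coe_toNNReal _ (by positivity)]
  have h4 : Summable (fun k : ℕ => 1/((k:ℝ)+3)) := by
    have := h3.mul_left 2
    refine this.congr fun k => ?_
    have h5 : ((k:ℝ)+3) ≠ 0 := by positivity
    field_simp
  have h5 : Summable (fun n : ℕ => 1/(n:ℝ)) := by
    rw [← summable_nat_add_iff 3]
    refine h4.congr fun k => ?_
    push_cast
    ring
  exact Real.not_summable_one_div_natCast h5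

lemma poisson_unit_top : poisson unitInterval' sigmaMeas = ⊤ := by
  have hlen : unitInterval'.len = 1 := by
    unfold unitInterval' RInterval.len; norm_num
  have hhalf : (1/2 : ℝ) ∈ unitInterval'.set := by
    unfold unitInterval' RInterval.set
    norm_num
  rw [poisson, sigmaMeas, lintegral_sum_measure]
  simp only [lintegral_smul_measure, lintegral_dirac, hlen]
  rw [eq_top_iff, ← harmonic_top]
  refine Summable.tsum_le_tsum (fun k => ?_) ENNReal.summable ENNReal.summable
  set d := Metric.infDist ((k:ℝ)+2) unitInterval'.set with hd
  have hd0 : 0 ≤ d := Metric.infDist_nonneg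
  have hdle : d ≤ (k:ℝ) + 3/2 := by
    calc d ≤ dist ((k:ℝ)+2) (1/2) := Metric.infDist_le_dist_of_mem hhalf
    _ = (k:ℝ) + 3/2 := by
        rw [Real.dist_eq, abs_of_nonneg (by have := Nat.cast_nonneg (α:=ℝ) k; linarith)]
        ring
  have hreal : 1/(2*((k:ℝ)+3)) ≤ ((k:ℝ)+2) * (1 / (1 + d) ^ 2) := by
    rw [mul_one_div, div_le_div_iff₀ (by positivity) (by positivity)]
    nlinarith
  have hc : ((k:ℝ≥0∞)+2) = ENNReal.ofReal ((k:ℝ)+2) := by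
    rw [ENNReal.ofReal_add (by positivity) (by norm_num)]
    simp
  rw [hc, smul_eq_mul, ← ENNReal.ofReal_mul (by positivity)]
  exact ENNReal.ofReal_le_ofReal hreal

/-- For `ω = δ_0` and `σ = ∑_{n≥2} n δ_n`, the pivotal condition `V(ω,σ)²`
holds, but the one-tailed `A_2` condition fails at `I = [0,1]`. -/
theorem stmt_8 :
    (∃ C > (0:ℝ), ∀ I₀ : RInterval, ∀ Ir : ℕ → RInterval,
      (Pairwise fun r s => Disjoint (Ir r).set (Ir s).set) →
      (⋃ r, (Ir r).set) = I₀.set →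
      ∑' r, omegaMeas (Ir r).set * (poisson (Ir r) (sigmaMeas.restrict I₀.set)) ^ 2 ≤
        ENNReal.ofReal C * sigmaMeas I₀.set) ∧
    (omegaMeas unitInterval'.set / ENNReal.ofReal unitInterval'.len) *
      poisson unitInterval' sigmaMeas = ⊤ := by
  constructor
  · refine ⟨8, by norm_num, ?_⟩
    intro I₀ Ir hdisj hunion
    have h8 : ENNReal.ofReal (8:ℝ) = (8:ℝ≥0∞) := by norm_num
    rw [h8]
    by_cases h : ∃ r, (0:ℝ) ∈ (Ir r).set
    · obtain ⟨r₀, hr₀⟩ := h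
      have h0 : (0:ℝ) ∈ I₀.set := by
        rw [← hunion]
        exact Set.mem_iUnion.2 ⟨r₀, hr₀⟩
      rw [tsum_eq_single r₀ ?_]
      · rw [omega_apply (Ir r₀).set measurableSet_Ico, if_pos hr₀, one_mul]
        exact main_bound _ _ hr₀ h0
      · intro r hr
        have hnot : (0:ℝ) ∉ (Ir r).set := fun h' =>
          Set.disjoint_left.1 (hdisj hr) h' hr₀
        rw [omega_apply (Ir r).set measurableSet_Ico, if_neg hnot, zero_mul]
    · push_neg at h
      have hz : ∀ r, omegaMeas (Ir r).set = 0 := fun r => by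
        rw [omega_apply (Ir r).set measurableSet_Ico, if_neg (h r)]
      simp [hz]
  · rw [poisson_unit_top, omega_apply unitInterval'.set measurableSet_Ico]
    have h0 : (0:ℝ) ∈ unitInterval'.set := by
      unfold unitInterval' RInterval.set
      norm_num
    rw [if_pos h0]
    have hlen : unitInterval'.len = 1 := by
      unfold unitInterval' RInterval.len; norm_num
    rw [hlen]
    simp
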